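/- Let C₁, C₂ and D be abelian categories, where C₁ and C₂ have enough projectives. Let Z : C₂ → D be an exact functor whose restriction to the full subcategory Proj(C₂) of projective objects of C₂ is fully faithful (i.e. for all projective objects P, Q of C₂ the map Hom(P, Q) → Hom(Z(P), Z(Q)) is bijective). Let K, L : C₁ → C₂ be right exact functors that map projective objects to projective objects. Then the map Hom(K, L) → Hom(Z ∘ K, Z ∘ L), sending a natural transformation f to the whiskered transformation 1_Z f, is a bijection. -/

import Mathlib

open CategoryTheory CategoryTheory.Limits

namespace WhiskerAuxProof

open Projective

section

variable {C₁ : Type*} [Category C₁] {C₂ : Type*} [Category C₂]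
    {D : Type*} [Category D]

/-- Components on projective objects, obtained from fullness of `Z` on projectives. -/
noncomputable def phi (Z : C₂ ⥤ D)
    (hZ : ∀ P Q : C₂, Projective P → Projective Q →
      Function.Bijective (fun f : P ⟶ Q => Z.map f))
    (K L : C₁ ⥤ C₂)
    (hK : ∀ X : C₁, Projective X → Projective (K.obj X))
    (hL : ∀ X : C₁, Projective X → Projective (L.obj X))
    (η : K ⋙ Z ⟶ L ⋙ Z) (P : C₁) [hP : Projective P] : K.obj P ⟶ L.obj P :=
  (Equiv.ofBijective _ (hZ _ _ (hK P hP) (hL P hP))).symm (η.app P)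

variable (Z : C₂ ⥤ D)
    (hZ : ∀ P Q : C₂, Projective P → Projective Q →
      Function.Bijective (fun f : P ⟶ Q => Z.map f))
    (K L : C₁ ⥤ C₂)
    (hK : ∀ X : C₁, Projective X → Projective (K.obj X))
    (hL : ∀ X : C₁, Projective X → Projective (L.obj X))
    (η : K ⋙ Z ⟶ L ⋙ Z)

lemma Z_map_phi (P : C₁) [hP : Projective P] :
    Z.map (phi Z hZ K L hK hL η P) = η.app P :=
  (Equiv.ofBijective _ (hZ _ _ (hK P hP) (hL P hP))).apply_symm_apply (η.app P)

lemma phi_nat {P Q : C₁} [hP : Projective P] [hQ : Projective Q] (g : P ⟶ Q) :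
    K.map g ≫ phi Z hZ K L hK hL η Q = phi Z hZ K L hK hL η P ≫ L.map g := by
  apply (hZ _ _ (hK P hP) (hL Q hQ)).1
  show Z.map _ = Z.map _
  rw [Z.map_comp, Z.map_comp, Z_map_phi, Z_map_phi]
  simpa using η.naturality g

end

section

variable {C₁ : Type*} [Category C₁] [Abelian C₁] [EnoughProjectives C₁]
    {C₂ : Type*} [Category C₂] [Abelian C₂]
    {D : Type*} [Category D] [Abelian D]

lemma hexactK (K : C₁ ⥤ C₂) [K.Additive] [PreservesFiniteColimits K] (X : C₁) :
    (ShortComplex.mk (K.map (d (π X))) (K.map (π X))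
      (by rw [← K.map_comp]; erw [Category.assoc, kernel.condition, comp_zero, K.map_zero])).Exact :=
  (exact_d_f (π X)).map_of_epi_of_preservesCokernel K inferInstance inferInstance

variable (Z : C₂ ⥤ D)
    (hZ : ∀ P Q : C₂, Projective P → Projective Q →
      Function.Bijective (fun f : P ⟶ Q => Z.map f))
    (K L : C₁ ⥤ C₂) [K.Additive] [L.Additive] [PreservesFiniteColimits K]
    (hK : ∀ X : C₁, Projective X → Projective (K.obj X))
    (hL : ∀ X : C₁, Projective X → Projective (L.obj X))
    (η : K ⋙ Z ⟶ L ⋙ Z)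

/-- The component of the lifted natural transformation at an arbitrary object. -/
noncomputable def fapp (X : C₁) : K.obj X ⟶ L.obj X := by
  have : Epi (ShortComplex.mk (K.map (d (π X))) (K.map (π X))
      (by rw [← K.map_comp]; erw [Category.assoc, kernel.condition, comp_zero, K.map_zero])).g := by
    show Epi (K.map (π X)); infer_instance
  exact (hexactK K X).desc
    (phi Z hZ K L hK hL η (Projective.over X) ≫ L.map (π X))
    (by
      show K.map (d (π X)) ≫ _ ≫ _ = 0
      rw [← Category.assoc, phi_nat, Category.assoc, ← L.map_comp]
      erw [Category.assoc, kernel.condition, comp_zero, L.map_zero, comp_zero])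

lemma map_π_fapp (X : C₁) :
    K.map (π X) ≫ fapp Z hZ K L hK hL η X =
      phi Z hZ K L hK hL η (Projective.over X) ≫ L.map (π X) := by
  have : Epi (ShortComplex.mk (K.map (d (π X))) (K.map (π X))
      (by rw [← K.map_comp]; erw [Category.assoc, kernel.condition, comp_zero, K.map_zero])).g := by
    show Epi (K.map (π X)); infer_instance
  exact (hexactK K X).g_desc _ _

lemma fapp_nat {X Y : C₁} (u : X ⟶ Y) :
    K.map u ≫ fapp Z hZ K L hK hL η Y = fapp Z hZ K L hK hL η X ≫ L.map u := by
  have : Epi (K.map (π X)) := inferInstance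
  rw [← cancel_epi (K.map (π X))]
  obtain ⟨v, hv⟩ : ∃ v : Projective.over X ⟶ Projective.over Y, v ≫ π Y = π X ≫ u :=
    ⟨Projective.factorThru (π X ≫ u) (π Y), Projective.factorThru_comp _ _⟩
  calc K.map (π X) ≫ K.map u ≫ fapp Z hZ K L hK hL η Y
      = K.map v ≫ K.map (π Y) ≫ fapp Z hZ K L hK hL η Y := by
        rw [← Category.assoc, ← Category.assoc, ← K.map_comp, ← K.map_comp, hv]
    _ = K.map v ≫ phi Z hZ K L hK hL η (Projective.over Y) ≫ L.map (π Y) := by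
        rw [map_π_fapp]
    _ = phi Z hZ K L hK hL η (Projective.over X) ≫ L.map v ≫ L.map (π Y) := by
        rw [← Category.assoc, phi_nat, Category.assoc]
    _ = phi Z hZ K L hK hL η (Projective.over X) ≫ L.map (π X) ≫ L.map u := by
        rw [← L.map_comp, hv, L.map_comp]
    _ = K.map (π X) ≫ fapp Z hZ K L hK hL η X ≫ L.map u := by
        conv_rhs => rw [← Category.assoc, map_π_fapp, Category.assoc]

/-- The lifted natural transformation. -/
noncomputable def liftNat : K ⟶ L where
  app X := fapp Z hZ K L hK hL η X
  naturality _ _ u := fapp_nat Z hZ K L hK hL η u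

end

end WhiskerAuxProof

/-- Let `C₁`, `C₂` and `D` be abelian categories, where `C₁` and `C₂`
have enough projectives.  Let `Z : C₂ ⥤ D` be an exact functor whose restriction to the
full subcategory of projective objects of `C₂` is fully faithful.  Let `K, L : C₁ ⥤ C₂`
be right exact functors (additive, preserving finite colimits) mapping projective objects
to projective objects.  Then the map `Hom(K, L) → Hom(Z ∘ K, Z ∘ L)`, sending a natural
transformation `f` to the whiskered transformation `1_Z f`, is a bijection. -/
theorem whisker_with_exact_fully_faithful_on_projectives_bijective
    {C₁ : Type*} [Category C₁] [Abelian C₁] [EnoughProjectives C₁]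
    {C₂ : Type*} [Category C₂] [Abelian C₂] [EnoughProjectives C₂]
    {D : Type*} [Category D] [Abelian D]
    (Z : C₂ ⥤ D) [Z.Additive] [PreservesFiniteLimits Z] [PreservesFiniteColimits Z]
    (hZ : ∀ P Q : C₂, Projective P → Projective Q →
      Function.Bijective (fun f : P ⟶ Q => Z.map f))
    (K L : C₁ ⥤ C₂) [K.Additive] [L.Additive]
    [PreservesFiniteColimits K] [PreservesFiniteColimits L]
    (hK : ∀ X : C₁, Projective X → Projective (K.obj X))
    (hL : ∀ X : C₁, Projective X → Projective (L.obj X)) :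
    Function.Bijective (fun f : K ⟶ L => Functor.whiskerRight f Z) := by
  constructor
  · -- injectivity
    intro f g h
    ext X
    have : Epi (K.map (Projective.π X)) := inferInstance
    rw [← cancel_epi (K.map (Projective.π X)), f.naturality, g.naturality]
    congr 1
    apply (hZ _ _ (hK _ inferInstance) (hL _ inferInstance)).1
    show Z.map _ = Z.map _
    have h1 := congrArg (fun t : K ⋙ Z ⟶ L ⋙ Z => t.app (Projective.over X)) h
    simpa using h1
  · -- surjectivity
    intro η
    refine ⟨WhiskerAuxProof.liftNat Z hZ K L hK hL η, ?_⟩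
    ext X
    show Z.map (WhiskerAuxProof.fapp Z hZ K L hK hL η X) = η.app X
    have : Epi (K.map (Projective.π X)) := inferInstance
    have : Epi (Z.map (K.map (Projective.π X))) := inferInstance
    rw [← cancel_epi (Z.map (K.map (Projective.π X))), ← Z.map_comp,
      WhiskerAuxProof.map_π_fapp, Z.map_comp, WhiskerAuxProof.Z_map_phi]
    have h2 := η.naturality (Projective.π X)
    simpa using h2.symm
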